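/- For a proper subdomain D of R^n and points x, y ∈ D, the Barrlund distance with p = 2 satisfies b_{D,2}(x,y) = |x-y| / sqrt( 2·d_D((x+y)/2)² + |x-y|²/2 ), where d_D(z) = dist(z, ∂D). -/
import Mathlib

open Set Metric

/-- Barrlund distance with parameter `2` in a domain `D`. -/
noncomputable def barrlund2 {n : ℕ} (D : Set (EuclideanSpace ℝ (Fin n)))
    (x y : EuclideanSpace ℝ (Fin n)) : ℝ :=
  sSup ((fun z => dist x y / Real.sqrt (dist x z ^ 2 + dist z y ^ 2)) '' frontier D)

lemma key_ident {n : ℕ} (x y z : EuclideanSpace ℝ (Fin n)) :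
    dist x z ^ 2 + dist z y ^ 2 =
      2 * dist z ((2⁻¹ : ℝ) • (x + y)) ^ 2 + dist x y ^ 2 / 2 := by
  have h := parallelogram_law_with_norm ℝ (x - z) (z - y)
  have h1 : x - z + (z - y) = x - y := by abel
  have h2 : x - z - (z - y) = (2 : ℝ) • (((2⁻¹ : ℝ) • (x + y)) - z) := by
    module
  rw [h1, h2, norm_smul] at h
  simp only [dist_eq_norm]
  have h3 : ‖(2 : ℝ)‖ = 2 := by norm_num
  rw [h3] at h
  rw [norm_sub_rev z ((2⁻¹ : ℝ) • (x + y))]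
  nlinarith [h]

theorem stmt4 {n : ℕ} (D : Set (EuclideanSpace ℝ (Fin n)))
    (hD : IsOpen D) (hDc : IsConnected D) (hDne : D ≠ univ)
    (x y : EuclideanSpace ℝ (Fin n)) (hx : x ∈ D) (hy : y ∈ D) :
    barrlund2 D x y =
      dist x y /
        Real.sqrt (2 * infDist ((2⁻¹ : ℝ) • (x + y)) (frontier D) ^ 2 + dist x y ^ 2 / 2) := by
  set m : EuclideanSpace ℝ (Fin n) := (2⁻¹ : ℝ) • (x + y) with hm
  set F := frontier D with hF
  have hFne : F.Nonempty := nonempty_frontier_iff.2 ⟨⟨x, hx⟩, hDne⟩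
  have hFc : IsClosed F := isClosed_frontier
  have hxF : x ∉ F := by rw [hF, hD.frontier_eq]; exact fun h => h.2 hx
  set d : ℝ := infDist m F with hd
  have hd0 : 0 ≤ d := infDist_nonneg
  -- positivity of the target denominator argument
  have hpos : 0 < 2 * d ^ 2 + dist x y ^ 2 / 2 := by
    rcases eq_or_ne x y with rfl | hxy
    · have hmx : m = x := by
        rw [hm]; rw [smul_add]; module
      have : 0 < d := by
        rw [hd, hmx]
        exact (hFc.notMem_iff_infDist_pos hFne).1 hxF
      positivity
    · have : 0 < dist x y := dist_pos.2 hxy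
      positivity
  -- pointwise denominator positivity
  have hzpos : ∀ z ∈ F, 0 < dist x z ^ 2 + dist z y ^ 2 := by
    intro z hz
    have hzx : z ≠ x := fun h => hxF (h ▸ hz)
    have : 0 < dist x z := dist_pos.2 (Ne.symm hzx)
    positivity
  -- upper bound for all elements of the image
  have hub : ∀ z ∈ F, dist x y / Real.sqrt (dist x z ^ 2 + dist z y ^ 2) ≤
      dist x y / Real.sqrt (2 * d ^ 2 + dist x y ^ 2 / 2) := by
    intro z hz
    rw [key_ident x y z, ← hm]
    have hdz : d ≤ dist z m := by
      rw [hd, dist_comm]; exact infDist_le_dist_of_mem hz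
    have hsq : Real.sqrt (2 * d ^ 2 + dist x y ^ 2 / 2) ≤
        Real.sqrt (2 * dist z m ^ 2 + dist x y ^ 2 / 2) :=
      Real.sqrt_le_sqrt (by nlinarith)
    exact div_le_div_of_nonneg_left dist_nonneg (Real.sqrt_pos.2 hpos) hsq
  obtain ⟨z₀, hz₀, hdz₀⟩ := hFc.exists_infDist_eq_dist hFne m
  rw [barrlund2]
  apply le_antisymm
  · exact csSup_le (hFne.image _) (by rintro a ⟨z, hz, rfl⟩; exact hub z hz)
  · apply le_csSup
    · exact ⟨_, by rintro a ⟨z, hz, rfl⟩; exact hub z hz⟩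
    · refine ⟨z₀, hz₀, ?_⟩
      show dist x y / Real.sqrt (dist x z₀ ^ 2 + dist z₀ y ^ 2) = _
      rw [key_ident x y z₀, ← hm, dist_comm z₀ m, ← hdz₀, ← hd]
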